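/- Let n ≥ 1 and let (A_1, …, A_{2n}) be a Clifford system on ℝ^m. Then for all x ∈ ℝ^m: ‖∇u(x)‖² = 16 ‖x‖² q(x), where u(x) = Σ_{i=1}^n ⟨x,A_ix⟩² − Σ_{i=1}^n ⟨x,A_{n+i}x⟩² and q(x) = Σ_{i=1}^{2n} ⟨x,A_ix⟩². -/

import Mathlib

open RealInnerProductSpace

/-- The quadratic form `P(x) = ⟨x, A x⟩` associated to an `m × m` real matrix `A`. -/
noncomputable def quadForm {m : ℕ} (A : Matrix (Fin m) (Fin m) ℝ)
    (x : EuclideanSpace ℝ (Fin m)) : ℝ :=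
  ⟪x, Matrix.toEuclideanLin A x⟫

/-- A Clifford system on `ℝ^m`. -/
def IsCliffordSystem {m N : ℕ} (A : Fin N → Matrix (Fin m) (Fin m) ℝ) : Prop :=
  (∀ i, (A i).IsSymm) ∧
    ∀ i j, A i * A j + A j * A i
      = (if i = j then (2 : ℝ) else 0) • (1 : Matrix (Fin m) (Fin m) ℝ)

/-- For a Clifford system `(A_1, …, A_{2n})` on `ℝ^m`, the degree-4 polynomial
`u(x) = Σ_{i=1}^n ⟨x, A_i x⟩² − Σ_{i=1}^n ⟨x, A_{n+i} x⟩²`. -/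
noncomputable def cliffU {m n : ℕ} (A : Fin (n + n) → Matrix (Fin m) (Fin m) ℝ)
    (x : EuclideanSpace ℝ (Fin m)) : ℝ :=
  ∑ i : Fin n, (quadForm (A (Fin.castAdd n i)) x) ^ 2
    - ∑ i : Fin n, (quadForm (A (Fin.natAdd n i)) x) ^ 2

/-- For a Clifford system `(A_1, …, A_{2n})` on `ℝ^m`, the degree-4 polynomial
`q(x) = Σ_{i=1}^{2n} ⟨x, A_i x⟩² = ‖P(x)‖²`. -/
noncomputable def cliffQ {m n : ℕ} (A : Fin (n + n) → Matrix (Fin m) (Fin m) ℝ)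
    (x : EuclideanSpace ℝ (Fin m)) : ℝ :=
  ∑ i : Fin (n + n), (quadForm (A i) x) ^ 2

section Aux

variable {m : ℕ}

local notation "E" => EuclideanSpace ℝ (Fin m)

noncomputable def cliffT (B : Matrix (Fin m) (Fin m) ℝ) : E →L[ℝ] E :=
  LinearMap.toContinuousLinearMap (Matrix.toEuclideanLin B)

lemma cliffT_symm {B : Matrix (Fin m) (Fin m) ℝ} (hB : B.IsSymm) (x y : E) :
    ⟪cliffT B x, y⟫ = ⟪x, cliffT B y⟫ := by
  have hH : B.IsHermitian := by
    rw [Matrix.IsHermitian]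
    simpa [Matrix.conjTranspose_eq_transpose_of_trivial, Matrix.IsSymm] using hB
  have := (Matrix.isHermitian_iff_isSymmetric.mp hH) x y
  simpa [cliffT] using this

lemma cliffT_mul (B C : Matrix (Fin m) (Fin m) ℝ) (x : E) :
    cliffT (B * C) x = cliffT B (cliffT C x) := by
  simp [cliffT, Matrix.toEuclideanLin_apply, Matrix.mulVec_mulVec]

lemma cliffT_add (B C : Matrix (Fin m) (Fin m) ℝ) (x : E) :
    cliffT (B + C) x = cliffT B x + cliffT C x := by
  simp [cliffT]

lemma cliffT_smul_one (c : ℝ) (x : E) :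
    cliffT (c • (1 : Matrix (Fin m) (Fin m) ℝ)) x = c • x := by
  simp [cliffT, Matrix.toEuclideanLin_apply, Matrix.one_mulVec]

lemma quadForm_eq (B : Matrix (Fin m) (Fin m) ℝ) (x : E) :
    quadForm B x = ⟪x, cliffT B x⟫ := rfl

lemma hasFDerivAt_quadForm {B : Matrix (Fin m) (Fin m) ℝ} (hB : B.IsSymm) (x : E) :
    HasFDerivAt (quadForm B) (innerSL ℝ ((2:ℝ) • cliffT B x)) x := by
  have h1 : HasFDerivAt (fun y : E => ⟪y, cliffT B y⟫)
      ((fderivInnerCLM ℝ (x, cliffT B x)).comp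
        ((ContinuousLinearMap.id ℝ E).prod (cliffT B))) x :=
    (hasFDerivAt_id x).inner ℝ ((cliffT B).hasFDerivAt)
  have heq : (fderivInnerCLM ℝ (x, cliffT B x)).comp
      ((ContinuousLinearMap.id ℝ E).prod (cliffT B))
      = innerSL ℝ ((2:ℝ) • cliffT B x) := by
    ext h
    simp only [ContinuousLinearMap.comp_apply, ContinuousLinearMap.prod_apply,
      ContinuousLinearMap.id_apply, fderivInnerCLM_apply, innerSL_apply_apply]
    rw [real_inner_smul_left]
    rw [← cliffT_symm hB x h, real_inner_comm (cliffT B x) h]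
    ring
  have : quadForm B = fun y : E => ⟪y, cliffT B y⟫ := funext fun y => quadForm_eq B y
  rw [this, ← heq]
  exact h1

lemma cliffT_inner {N : ℕ} {A : Fin N → Matrix (Fin m) (Fin m) ℝ}
    (hA : IsCliffordSystem A) (i j : Fin N) (x : E) :
    ⟪cliffT (A i) x, cliffT (A j) x⟫ = (if i = j then (1:ℝ) else 0) * ⟪x, x⟫ := by
  have h1 : ⟪cliffT (A i) x, cliffT (A j) x⟫ = ⟪x, cliffT (A i) (cliffT (A j) x)⟫ :=
    cliffT_symm (hA.1 i) x (cliffT (A j) x)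
  have h2 : ⟪cliffT (A i) x, cliffT (A j) x⟫ = ⟪x, cliffT (A j) (cliffT (A i) x)⟫ := by
    rw [real_inner_comm]
    exact cliffT_symm (hA.1 j) x (cliffT (A i) x)
  have h3 : (2:ℝ) * ⟪cliffT (A i) x, cliffT (A j) x⟫
      = ⟪x, cliffT (A i * A j + A j * A i) x⟫ := by
    rw [cliffT_add, cliffT_mul, cliffT_mul, inner_add_right, ← h1, ← h2]
    ring
  rw [hA.2 i j, cliffT_smul_one, real_inner_smul_right] at h3
  split_ifs at h3 ⊢ with h
  · linarith
  · linarith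

end Aux

/-- For a Clifford system `(A_1, …, A_{2n})` on `ℝ^m` (`n ≥ 1`):
`‖∇u(x)‖² = 16 ‖x‖² q(x)` for all `x ∈ ℝ^m`. -/
theorem grad_u_sq {m n : ℕ} (hn : 1 ≤ n)
    (A : Fin (n + n) → Matrix (Fin m) (Fin m) ℝ) (hA : IsCliffordSystem A) :
    ∀ x : EuclideanSpace ℝ (Fin m),
      ‖gradient (cliffU A) x‖ ^ 2 = 16 * ‖x‖ ^ 2 * cliffQ A x := by
  intro x
  set c : Fin (n + n) → ℝ := fun i => if (i : ℕ) < n then 1 else -1 with hc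
  have hc2 : ∀ i, c i * c i = 1 := fun i => by
    by_cases h : (i : ℕ) < n <;> simp [hc, h]
  -- rewrite u as a single signed sum
  have hU : cliffU A = fun y => ∑ i : Fin (n + n), c i * (quadForm (A i) y) ^ 2 := by
    funext y
    have ha : ∀ i : Fin n, c (Fin.castAdd n i) = 1 := fun i => if_pos i.isLt
    have hb : ∀ i : Fin n, c (Fin.natAdd n i) = -1 := fun i =>
      if_neg (by simp)
    unfold cliffU
    rw [Fin.sum_univ_add]
    simp only [ha, hb, one_mul, neg_one_mul, Finset.sum_neg_distrib]
    ring
  -- the gradient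
  set G : EuclideanSpace ℝ (Fin m) :=
    ∑ i : Fin (n + n), ((4:ℝ) * c i * quadForm (A i) x) • cliffT (A i) x with hGdef
  have hterm : ∀ i : Fin (n + n),
      HasFDerivAt (fun y => c i * (quadForm (A i) y) ^ 2)
        (((4:ℝ) * c i * quadForm (A i) x) • innerSL ℝ (cliffT (A i) x)) x := by
    intro i
    have h0 := hasFDerivAt_quadForm (hA.1 i) x
    have h1 := (h0.mul h0).const_mul (c i)
    have hfun : (fun y => c i * (quadForm (A i) y) ^ 2)
        = fun y => c i * (quadForm (A i) y * quadForm (A i) y) := by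
      funext y; ring
    have hclm : c i • (quadForm (A i) x • innerSL ℝ ((2:ℝ) • cliffT (A i) x)
          + quadForm (A i) x • innerSL ℝ ((2:ℝ) • cliffT (A i) x))
        = ((4:ℝ) * c i * quadForm (A i) x) • innerSL ℝ (cliffT (A i) x) := by
      ext h
      simp only [ContinuousLinearMap.smul_apply, ContinuousLinearMap.add_apply,
        innerSL_apply_apply, real_inner_smul_left, smul_eq_mul]
      ring
    rw [hfun, ← hclm]
    exact h1
  have hsum := HasFDerivAt.fun_sum (fun i (_ : i ∈ Finset.univ) => hterm i)
  have hdual : (InnerProductSpace.toDual ℝ (EuclideanSpace ℝ (Fin m))) G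
      = ∑ i : Fin (n + n), ((4:ℝ) * c i * quadForm (A i) x) • innerSL ℝ (cliffT (A i) x) := by
    ext h
    simp only [InnerProductSpace.toDual_apply_apply, hGdef, sum_inner,
      ContinuousLinearMap.sum_apply, ContinuousLinearMap.smul_apply, innerSL_apply_apply,
      real_inner_smul_left, smul_eq_mul]
  have hG : HasGradientAt (cliffU A) G x := by
    rw [hasGradientAt_iff_hasFDerivAt, hdual, hU]
    exact hsum
  rw [hG.gradient, ← real_inner_self_eq_norm_sq]
  have key : ∀ i j : Fin (n + n),
      (((4:ℝ) * c i * quadForm (A i) x) * (((4:ℝ) * c j * quadForm (A j) x)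
        * ⟪cliffT (A i) x, cliffT (A j) x⟫))
      = if j = i then 16 * (quadForm (A i) x) ^ 2 * ⟪x, x⟫ else 0 := by
    intro i j
    rw [cliffT_inner hA i j x]
    by_cases h : i = j
    · subst h
      rw [if_pos rfl, if_pos rfl]
      have hr : ((4:ℝ) * c i * quadForm (A i) x) * (((4:ℝ) * c i * quadForm (A i) x)
          * ((1:ℝ) * ⟪x, x⟫)) = 16 * (c i * c i) * ((quadForm (A i) x) ^ 2 * ⟪x, x⟫) := by
        ring
      rw [hr, hc2 i]
      ring
    · rw [if_neg h, if_neg (fun hji => h hji.symm)]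
      ring
  calc ⟪G, G⟫
      = ∑ i : Fin (n + n), ∑ j : Fin (n + n),
          (((4:ℝ) * c i * quadForm (A i) x) * (((4:ℝ) * c j * quadForm (A j) x)
            * ⟪cliffT (A i) x, cliffT (A j) x⟫)) := by
        rw [hGdef, sum_inner]
        refine Finset.sum_congr rfl fun i _ => ?_
        rw [real_inner_smul_left, inner_sum, Finset.mul_sum]
        refine Finset.sum_congr rfl fun j _ => ?_
        rw [real_inner_smul_right]
    _ = ∑ i : Fin (n + n), 16 * (quadForm (A i) x) ^ 2 * ⟪x, x⟫ := by
        refine Finset.sum_congr rfl fun i _ => ?_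
        rw [Finset.sum_congr rfl fun j _ => key i j, Finset.sum_ite_eq' Finset.univ i
          (fun _ => 16 * (quadForm (A i) x) ^ 2 * ⟪x, x⟫), if_pos (Finset.mem_univ i)]
    _ = 16 * ‖x‖ ^ 2 * cliffQ A x := by
        simp only [cliffQ, Finset.mul_sum]
        refine Finset.sum_congr rfl fun i _ => ?_
        rw [real_inner_self_eq_norm_sq]
        ring
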